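/- For u = x₁x₄ - x₂x₃ - (y₁y₄ - y₂y₃) and v = x₁y₄ + x₄y₁ - (x₂y₃ + x₃y₂) on ℝ⁸ (real and imaginary part of the determinant of a complex 2×2 matrix), one has uᵢuⱼu_{ij} = 2u, vᵢvⱼv_{ij} = 2v, uᵢvⱼu_{ij} = -2v, and vᵢvⱼu_{ij} = 2u (summation over repeated indices, where subscripts denote partial derivatives). -/

import Mathlib

/-- First partial derivative in the `i`-th coordinate direction. -/
noncomputable def D15 (i : Fin 8) (f : EuclideanSpace ℝ (Fin 8) → ℝ)
    (x : EuclideanSpace ℝ (Fin 8)) : ℝ :=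
  fderiv ℝ f x (EuclideanSpace.single i 1)

/-- Second partial derivative `∂ᵢ∂ⱼ`. -/
noncomputable def D215 (i j : Fin 8) (f : EuclideanSpace ℝ (Fin 8) → ℝ)
    (x : EuclideanSpace ℝ (Fin 8)) : ℝ :=
  fderiv ℝ (fun y => fderiv ℝ f y (EuclideanSpace.single j 1)) x (EuclideanSpace.single i 1)

noncomputable def pr15 (a : Fin 8) : EuclideanSpace ℝ (Fin 8) →L[ℝ] ℝ :=
  EuclideanSpace.proj a

noncomputable def Bmul15 (a b : Fin 8) :
    EuclideanSpace ℝ (Fin 8) →L[ℝ] EuclideanSpace ℝ (Fin 8) →L[ℝ] ℝ :=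
  (pr15 a).smulRight (pr15 b) + (pr15 b).smulRight (pr15 a)

lemma hasFDerivAt_mul15 (a b : Fin 8) (y : EuclideanSpace ℝ (Fin 8)) :
    HasFDerivAt (fun z : EuclideanSpace ℝ (Fin 8) => z a * z b) (Bmul15 a b y) y := by
  have h := ((EuclideanSpace.proj (𝕜 := ℝ) a).hasFDerivAt (x := y)).mul
    ((EuclideanSpace.proj (𝕜 := ℝ) b).hasFDerivAt (x := y))
  have : (EuclideanSpace.proj (𝕜 := ℝ) a) y • (EuclideanSpace.proj (𝕜 := ℝ) b)
      + (EuclideanSpace.proj (𝕜 := ℝ) b) y • (EuclideanSpace.proj (𝕜 := ℝ) a)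
      = Bmul15 a b y := by
    ext z
    simp [Bmul15, pr15, mul_comm]
  rw [this] at h
  exact h

set_option maxHeartbeats 1600000 in
theorem stmt15 (u v : EuclideanSpace ℝ (Fin 8) → ℝ)
    (hu : ∀ z, u z = z 0 * z 3 - z 1 * z 2 - (z 4 * z 7 - z 5 * z 6))
    (hv : ∀ z, v z = z 0 * z 7 + z 3 * z 4 - (z 1 * z 6 + z 2 * z 5))
    (x : EuclideanSpace ℝ (Fin 8)) :
    (∑ i, ∑ j, D15 i u x * D215 i j u x * D15 j u x) = 2 * u x ∧
    (∑ i, ∑ j, D15 i v x * D215 i j v x * D15 j v x) = 2 * v x ∧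
    (∑ i, ∑ j, D15 i u x * D215 i j v x * D15 j u x) = -2 * v x ∧
    (∑ i, ∑ j, D15 i v x * D215 i j v x * D15 j u x) = 2 * u x := by
  set Bu := Bmul15 0 3 - Bmul15 1 2 - (Bmul15 4 7 - Bmul15 5 6) with hBu
  set Bv := Bmul15 0 7 + Bmul15 3 4 - (Bmul15 1 6 + Bmul15 2 5) with hBv
  have hueq : u = fun z => z 0 * z 3 - z 1 * z 2 - (z 4 * z 7 - z 5 * z 6) := funext hu
  have hveq : v = fun z => z 0 * z 7 + z 3 * z 4 - (z 1 * z 6 + z 2 * z 5) := funext hv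
  have hu' : ∀ y, HasFDerivAt u (Bu y) y := by
    intro y
    rw [hueq]
    have h := ((hasFDerivAt_mul15 0 3 y).sub (hasFDerivAt_mul15 1 2 y)).sub
      ((hasFDerivAt_mul15 4 7 y).sub (hasFDerivAt_mul15 5 6 y))
    have e : Bmul15 0 3 y - Bmul15 1 2 y - (Bmul15 4 7 y - Bmul15 5 6 y) = Bu y := by
      simp [hBu]
    rwa [e] at h
  have hv' : ∀ y, HasFDerivAt v (Bv y) y := by
    intro y
    rw [hveq]
    have h := ((hasFDerivAt_mul15 0 7 y).add (hasFDerivAt_mul15 3 4 y)).sub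
      ((hasFDerivAt_mul15 1 6 y).add (hasFDerivAt_mul15 2 5 y))
    have e : Bmul15 0 7 y + Bmul15 3 4 y - (Bmul15 1 6 y + Bmul15 2 5 y) = Bv y := by
      simp [hBv]
    rwa [e] at h
  have hD1u : ∀ i, D15 i u x = Bu x (EuclideanSpace.single i 1) := by
    intro i; unfold D15; rw [(hu' x).fderiv]
  have hD1v : ∀ i, D15 i v x = Bv x (EuclideanSpace.single i 1) := by
    intro i; unfold D15; rw [(hv' x).fderiv]
  have hD2u : ∀ i j, D215 i j u x = Bu (EuclideanSpace.single i 1) (EuclideanSpace.single j 1) := by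
    intro i j
    unfold D215
    have e : (fun y => fderiv ℝ u y (EuclideanSpace.single j 1))
        = fun y => (Bu.flip (EuclideanSpace.single j 1)) y := by
      funext y; rw [(hu' y).fderiv]; simp
    rw [e, ContinuousLinearMap.fderiv]
    simp
  have hD2v : ∀ i j, D215 i j v x = Bv (EuclideanSpace.single i 1) (EuclideanSpace.single j 1) := by
    intro i j
    unfold D215
    have e : (fun y => fderiv ℝ v y (EuclideanSpace.single j 1))
        = fun y => (Bv.flip (EuclideanSpace.single j 1)) y := by
      funext y; rw [(hv' y).fderiv]; simp
    rw [e, ContinuousLinearMap.fderiv]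
    simp
  simp only [Fin.sum_univ_eight, hD1u, hD1v, hD2u, hD2v, hBu, hBv]
  rw [hu x, hv x]
  simp only [Bmul15, pr15, ContinuousLinearMap.sub_apply, ContinuousLinearMap.add_apply,
    ContinuousLinearMap.smulRight_apply, ContinuousLinearMap.smul_apply, smul_eq_mul,
    PiLp.proj_apply, EuclideanSpace.single_apply, Fin.reduceEq, reduceIte]
  norm_num
  refine ⟨by ring, by ring, by ring, by ring⟩
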